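/- Let γ(x,ξ) = ((|ξ|²(1+|∇η(x)|²) − (∇η(x)·ξ)²)/(1+|∇η(x)|²))^{3/4} for a function η with ∇η ∈ L^∞(ℝ^d). Then there exists an absolute constant C_d > 0 such that, with c₀ = C_d(1 + ‖∇η‖_{L^∞})^{-N} for some N (a positive lower bound depending only on d and ‖∇η‖_{L^∞}), for every fixed annulus C ⊂ ℝ^d∖{0}: inf over (x,ξ) ∈ ℝ^d × C of |det ∂_ξ² γ(x,ξ)| ≥ c₀ > 0. In particular the Hessian in ξ of the symbol γ is nondegenerate on every annulus, uniformly in x. -/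

import Mathlib

open MeasureTheory Real
open scoped FourierTransform RealInnerProductSpace ENNReal

noncomputable section

abbrev Ed (d : ℕ) := EuclideanSpace ℝ (Fin d)

/-- the symbol `γ(x,ξ) = ((|ξ|²(1+|g(x)|²) − (g(x)·ξ)²)/(1+|g(x)|²))^{3/4}`,
where `g = ∇η`. -/
noncomputable def gammaSym {d : ℕ} (g : Ed d → Ed d) (x ξ : Ed d) : ℝ :=
  ((‖ξ‖ ^ 2 * (1 + ‖g x‖ ^ 2) - (⟪g x, ξ⟫ : ℝ) ^ 2) / (1 + ‖g x‖ ^ 2)) ^ ((3:ℝ)/4)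

/-- the Hessian matrix in `ξ` of a real-valued function on `ℝ^d`. -/
noncomputable def hessXi {d : ℕ} (f : Ed d → ℝ) (ξ : Ed d) :
    Matrix (Fin d) (Fin d) ℝ :=
  Matrix.of fun i j =>
    fderiv ℝ (fun ζ => fderiv ℝ f ζ (EuclideanSpace.single i 1)) ξ
      (EuclideanSpace.single j 1)

open Matrix

section aux
variable {d : ℕ}

def qf (v ζ : Ed d) : ℝ := ‖ζ‖ ^ 2 - ⟪v, ζ⟫ ^ 2 / (1 + ‖v‖ ^ 2)

/-- its derivative as a CLM -/
def Dq (v ζ : Ed d) : Ed d →L[ℝ] ℝ :=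
  (2 : ℝ) • innerSL ℝ ζ - (2 * ⟪v, ζ⟫ / (1 + ‖v‖ ^ 2)) • innerSL ℝ v

lemma hs_pos (v : Ed d) : (0:ℝ) < 1 + ‖v‖ ^ 2 := by positivity

lemma qf_pos (v : Ed d) {ζ : Ed d} (hζ : ζ ≠ 0) : 0 < qf v ζ := by
  have h1 : |⟪v, ζ⟫| ≤ ‖v‖ * ‖ζ‖ := abs_real_inner_le_norm v ζ
  have h2 : ⟪v, ζ⟫ ^ 2 ≤ (‖v‖ * ‖ζ‖) ^ 2 := by
    rw [← sq_abs]; exact pow_le_pow_left₀ (abs_nonneg _) h1 2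
  have h3 : (0:ℝ) < ‖ζ‖ := norm_pos_iff.mpr hζ
  have h4 : (0:ℝ) < 1 + ‖v‖ ^ 2 := hs_pos v
  rw [qf, sub_pos, div_lt_iff₀ h4]
  nlinarith [sq_nonneg ‖v‖, sq_nonneg (‖v‖ * ‖ζ‖)]

lemma hasFDerivAt_qf (v ζ : Ed d) : HasFDerivAt (qf v) (Dq v ζ) ζ := by
  have hb : HasFDerivAt (fun ζ : Ed d => ⟪v, ζ⟫) (innerSL ℝ v) ζ :=
    (innerSL ℝ v).hasFDerivAt
  have ha : HasFDerivAt (fun ζ : Ed d => ⟪ζ, ζ⟫)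
      ((fderivInnerCLM ℝ (ζ, ζ)).comp ((ContinuousLinearMap.id ℝ (Ed d)).prod
        (ContinuousLinearMap.id ℝ (Ed d)))) ζ :=
    (hasFDerivAt_id ζ).inner ℝ (hasFDerivAt_id ζ)
  have h := ha.sub (((hb.mul hb)).const_mul ((1 + ‖v‖ ^ 2)⁻¹))
  have hq : qf v = fun ζ : Ed d => ⟪ζ, ζ⟫ - (1 + ‖v‖ ^ 2)⁻¹ * (⟪v, ζ⟫ * ⟪v, ζ⟫) := by
    funext ζ; rw [qf, real_inner_self_eq_norm_sq, sq]; ring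
  rw [hq]
  refine HasFDerivAt.congr_fderiv h ?_
  ext h1
  simp [Dq, fderivInnerCLM_apply, innerSL_apply_apply]
  have : ∑ x : Fin d, ζ x * h1 x = ∑ x : Fin d, h1 x * ζ x := by
    exact Finset.sum_congr rfl fun x _ => mul_comm _ _
  rw [real_inner_comm ζ h1]; ring

def phi (v : Ed d) (i : Fin d) (ζ : Ed d) : ℝ :=
  ((3:ℝ)/4 * qf v ζ ^ ((3:ℝ)/4 - 1)) * Dq v ζ (EuclideanSpace.single i 1)

lemma hasFDerivAt_f (v : Ed d) {ζ : Ed d} (hζ : ζ ≠ 0) :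
    HasFDerivAt (fun ζ => qf v ζ ^ ((3:ℝ)/4))
      (((3:ℝ)/4 * qf v ζ ^ ((3:ℝ)/4 - 1)) • Dq v ζ) ζ :=
  (hasFDerivAt_qf v ζ).rpow_const (Or.inl (qf_pos v hζ).ne')

lemma fderiv_f_eq (v : Ed d) {ζ : Ed d} (hζ : ζ ≠ 0) (i : Fin d) :
    fderiv ℝ (fun ζ => qf v ζ ^ ((3:ℝ)/4)) ζ (EuclideanSpace.single i 1) = phi v i ζ := by
  rw [(hasFDerivAt_f v hζ).fderiv]; simp [phi]

def Li (v : Ed d) (i : Fin d) : Ed d →L[ℝ] ℝ :=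
  (2 : ℝ) • innerSL ℝ (EuclideanSpace.single i (1:ℝ)) -
    (2 * v i / (1 + ‖v‖ ^ 2)) • innerSL ℝ v

lemma phi_eq (v : Ed d) (i : Fin d) :
    phi v i = fun ζ => ((3:ℝ)/4 * qf v ζ ^ ((3:ℝ)/4 - 1)) * Li v i ζ := by
  funext ζ
  simp [phi, Dq, Li, innerSL_apply_apply, EuclideanSpace.inner_single_right,
    EuclideanSpace.inner_single_left, real_inner_comm]
  exact Or.inl (by ring)

lemma hess_entry (v : Ed d) {ξ : Ed d} (hξ : ξ ≠ 0) (i j : Fin d) :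
    hessXi (fun ζ => qf v ζ ^ ((3:ℝ)/4)) ξ i j =
      ((3:ℝ)/2 * qf v ξ ^ ((3:ℝ)/4 - 1)) *
          ((if i = j then (1:ℝ) else 0) - v i * v j / (1 + ‖v‖ ^ 2))
        - (3:ℝ)/4 * qf v ξ ^ ((3:ℝ)/4 - 1 - 1) *
          ((ξ i - ⟪v, ξ⟫ * v i / (1 + ‖v‖ ^ 2)) * (ξ j - ⟪v, ξ⟫ * v j / (1 + ‖v‖ ^ 2))) := by
  have hev : (fun ζ => fderiv ℝ (fun ζ => qf v ζ ^ ((3:ℝ)/4)) ζ (EuclideanSpace.single i 1))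
      =ᶠ[nhds ξ] phi v i := by
    filter_upwards [eventually_ne_nhds hξ] with ζ hζ using fderiv_f_eq v hζ i
  have hA : HasFDerivAt (fun ζ => qf v ζ ^ ((3:ℝ)/4 - 1))
      ((((3:ℝ)/4 - 1) * qf v ξ ^ ((3:ℝ)/4 - 1 - 1)) • Dq v ξ) ξ :=
    (hasFDerivAt_qf v ξ).rpow_const (Or.inl (qf_pos v hξ).ne')
  have hprod := (hA.const_mul ((3:ℝ)/4)).mul (Li v i).hasFDerivAt
  rw [show ((fun y => (3:ℝ)/4 * qf v y ^ ((3:ℝ)/4 - 1)) * ⇑(Li v i)) = phi v i from (phi_eq v i).symm] at hprod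
  have h2 : hessXi (fun ζ => qf v ζ ^ ((3:ℝ)/4)) ξ i j
      = fderiv ℝ (phi v i) ξ (EuclideanSpace.single j 1) := by
    simp only [hessXi, Matrix.of_apply]
    rw [hev.fderiv_eq]
  rw [h2, hprod.fderiv]
  have hs := (hs_pos v).ne'
  simp [Li, Dq, innerSL_apply_apply, EuclideanSpace.inner_single_right,
    EuclideanSpace.inner_single_left, real_inner_comm, EuclideanSpace.single_apply]
  split_ifs with h h'
  · ring
  · exact absurd h.symm h'
  · exact absurd ‹i = j›.symm h
  · ring

open Matrix in
lemma det_aux (V W : Fin d → ℝ) (k : ℝ) :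
    (Matrix.of fun i j => (if i = j then (1:ℝ) else 0)
        - (1 + V ⬝ᵥ V)⁻¹ * (V i * V j) - k * (W i * W j)).det
      = (1 + V ⬝ᵥ V)⁻¹ * (1 - k * (W ⬝ᵥ W + (V ⬝ᵥ W) ^ 2)) := by
  set s : ℝ := 1 + V ⬝ᵥ V with hs_def
  have hVV : 0 ≤ V ⬝ᵥ V := Finset.sum_nonneg fun i _ => mul_self_nonneg _
  have hs0 : s ≠ 0 := by positivity
  set A : Matrix (Fin d) (Fin d) ℝ :=
    Matrix.of (fun i j => (if i = j then (1:ℝ) else 0) - s⁻¹ * (V i * V j)) with hA_def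
  set B : Matrix (Fin d) (Fin d) ℝ :=
    Matrix.of (fun i j => (if i = j then (1:ℝ) else 0) + V i * V j) with hB_def
  have hAB : A * B = 1 := by
    ext i j
    rw [Matrix.mul_apply]
    have : ∀ x, A i x * B x j =
        ((if i = x then (1:ℝ) else 0) * (if x = j then (1:ℝ) else 0)
          + (if i = x then (1:ℝ) else 0) * (V x * V j))
        - (s⁻¹ * (V i * V j) * (if x = j then (1:ℝ) else 0)
          + s⁻¹ * V i * (V x * V x) * V j) := by
      intro x
      simp only [hA_def, hB_def, Matrix.of_apply]
      split_ifs with h1 h2 <;> subst_eqs <;> ring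
    rw [Finset.sum_congr rfl fun x _ => this x]
    have hd : ∑ x, s⁻¹ * V i * (V x * V x) * V j = s⁻¹ * V i * (V ⬝ᵥ V) * V j := by
      rw [dotProduct, Finset.mul_sum, Finset.sum_mul]
    rw [Finset.sum_sub_distrib, Finset.sum_add_distrib, Finset.sum_add_distrib, hd]
    simp only [ite_mul, mul_ite, mul_zero, zero_mul, mul_one, one_mul,
      Finset.sum_ite_eq, Finset.sum_ite_eq', Finset.mem_univ, if_true]
    rw [Matrix.one_apply]
    have hss : s⁻¹ * (V ⬝ᵥ V) = 1 - s⁻¹ := by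
      field_simp [hs_def]; linarith
    split_ifs with h
    all_goals linear_combination (-(V i * V j)) * hss
  have hss : s⁻¹ * (V ⬝ᵥ V) = 1 - s⁻¹ := by field_simp [hs_def]; linarith
  have hAdet : A.det = s⁻¹ := by
    have hA2 : A = 1 + Matrix.replicateCol (Fin 1) (fun i => -(s⁻¹ * V i)) * Matrix.replicateRow (Fin 1) V := by
      ext i j
      simp [hA_def, Matrix.mul_apply, Matrix.one_apply, Matrix.replicateCol, Matrix.replicateRow]
      ring
    erw [hA2, Matrix.det_one_add_replicateCol_mul_replicateRow (ι := Fin 1)]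
    have h1 : V ⬝ᵥ (fun i => -(s⁻¹ * V i)) = -(s⁻¹ * (V ⬝ᵥ V)) := by
      simp [dotProduct, Finset.mul_sum, mul_comm, mul_left_comm]
      exact Finset.sum_congr rfl fun x _ => by ring
    rw [h1, hss]; ring
  have hBW : ∀ i, (B *ᵥ W) i = W i + V i * (V ⬝ᵥ W) := by
    intro i
    rw [Matrix.mulVec, dotProduct]
    simp only [hB_def, Matrix.of_apply, add_mul, ite_mul, one_mul, zero_mul,
      Finset.sum_add_distrib, Finset.sum_ite_eq, Finset.mem_univ, if_true]
    rw [dotProduct, Finset.mul_sum]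
    congr 1
    exact Finset.sum_congr rfl fun x _ => by ring
  set C : Matrix (Fin d) (Fin d) ℝ :=
    Matrix.of (fun i j => (if i = j then (1:ℝ) else 0) - k * ((B *ᵥ W) i * W j)) with hC_def
  have hApu : A *ᵥ (B *ᵥ W) = W := by
    rw [Matrix.mulVec_mulVec, hAB, Matrix.one_mulVec]
  have hMC : (Matrix.of fun i j => (if i = j then (1:ℝ) else 0)
        - (1 + V ⬝ᵥ V)⁻¹ * (V i * V j) - k * (W i * W j))
      = A * C := by
    ext i j
    rw [Matrix.mul_apply]
    have h5 : ∀ x, A i x * C x j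
        = (A i x * if x = j then (1:ℝ) else 0) - k * W j * (A i x * (B *ᵥ W) x) := by
      intro x; simp only [hC_def, Matrix.of_apply]; ring
    rw [Finset.sum_congr rfl fun x _ => h5 x, Finset.sum_sub_distrib, ← Finset.mul_sum]
    have h6 : ∑ x, A i x * (B *ᵥ W) x = (A *ᵥ (B *ᵥ W)) i := rfl
    rw [h6, hApu]
    simp only [mul_ite, mul_one, mul_zero, Finset.sum_ite_eq', Finset.mem_univ, if_true]
    simp only [hA_def, Matrix.of_apply, ← hs_def]
    ring
  have hCdet : C.det = 1 - k * (W ⬝ᵥ W + (V ⬝ᵥ W) ^ 2) := by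
    have hC2 : C = 1 + Matrix.replicateCol (Fin 1) (fun i => -(k * (B *ᵥ W) i)) * Matrix.replicateRow (Fin 1) W := by
      ext i j
      simp [hC_def, Matrix.mul_apply, Matrix.one_apply, Matrix.replicateCol, Matrix.replicateRow]
      ring
    erw [hC2, Matrix.det_one_add_replicateCol_mul_replicateRow (ι := Fin 1)]
    have h7 : W ⬝ᵥ (fun i => -(k * (B *ᵥ W) i)) = -(k * (W ⬝ᵥ W + (V ⬝ᵥ W) ^ 2)) := by
      rw [dotProduct]
      have h8 : ∀ i, W i * -(k * (B *ᵥ W) i)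
          = -(k * (W i * W i)) - k * (V ⬝ᵥ W) * (V i * W i) := by
        intro i; rw [hBW i]; ring
      rw [Finset.sum_congr rfl fun i _ => h8 i, Finset.sum_sub_distrib]
      have h9 : ∑ i, -(k * (W i * W i)) = -(k * (W ⬝ᵥ W)) := by
        rw [dotProduct, Finset.mul_sum]; simp
      have h10 : ∑ i, k * (V ⬝ᵥ W) * (V i * W i) = k * (V ⬝ᵥ W) * (V ⬝ᵥ W) := by
        rw [← Finset.mul_sum]
        congr 1
      rw [h9, h10]; ring
    rw [h7]; ring
  rw [hMC, Matrix.det_mul, hAdet, hCdet]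



set_option maxHeartbeats 2000000 in
/-- uniform nondegeneracy of the Hessian `∂_ξ² γ` on any fixed
annulus: `|det ∂_ξ² γ(x,ξ)| ≥ C_d (1+‖∇η‖_{L^∞})^{-N} > 0`. -/
theorem stmt6 (d : ℕ) (hd : 0 < d) (R₁ R₂ : ℝ) (hR₁ : 0 < R₁) (hR₂ : R₁ ≤ R₂) :
    ∃ (C : ℝ) (N : ℕ), 0 < C ∧
      ∀ (η : Ed d → ℝ) (M : ℝ), 0 ≤ M →
        (∀ x : Ed d, ‖gradient η x‖ ≤ M) →
        ∀ (x ξ : Ed d), R₁ ≤ ‖ξ‖ → ‖ξ‖ ≤ R₂ →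
          C * (1 + M) ^ (-(N : ℝ)) ≤
            |(hessXi (fun ζ => gammaSym (fun y => gradient η y) x ζ) ξ).det| := by

  have hR2 : 0 < R₂ := lt_of_lt_of_le hR₁ hR₂
  have hc0 : (0:ℝ) < (3:ℝ)/2 * (R₂ ^ 2) ^ ((3:ℝ)/4 - 1) := by positivity
  refine ⟨((3:ℝ)/2 * (R₂ ^ 2) ^ ((3:ℝ)/4 - 1)) ^ d / 2, 2, by positivity, ?_⟩
  intro η M hM hgrad x ξ hξ1 hξ2
  set v : Ed d := gradient η x with hv
  have hvM : ‖v‖ ≤ M := hgrad x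
  have hs : (0:ℝ) < 1 + ‖v‖ ^ 2 := hs_pos v
  have hξ0 : ξ ≠ 0 := fun h => by rw [h, norm_zero] at hξ1; linarith
  have hQ : 0 < qf v ξ := qf_pos v hξ0
  have hfun : (fun ζ => gammaSym (fun y => gradient η y) x ζ)
      = fun ζ => qf v ζ ^ ((3:ℝ)/4) := by
    funext ζ
    simp only [gammaSym, qf, ← hv]
    congr 1
    field_simp
  rw [hfun]
  have hvξ : ⟪v, ξ⟫ = ∑ i, v i * ξ i := by
    simp [PiLp.inner_apply, RCLike.inner_apply, conj_trivial]
    exact Finset.sum_congr rfl fun _ _ => mul_comm _ _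
  have hnv : ‖v‖ ^ 2 = ∑ i, v i * v i := by
    rw [← real_inner_self_eq_norm_sq]
    simp only [PiLp.inner_apply, RCLike.inner_apply, conj_trivial]
  have hnξ : ‖ξ‖ ^ 2 = ∑ i, ξ i * ξ i := by
    rw [← real_inner_self_eq_norm_sq]
    simp only [PiLp.inner_apply, RCLike.inner_apply, conj_trivial]
  set V : Fin d → ℝ := fun i => v i with hV
  set W : Fin d → ℝ := fun i => ξ i - ⟪v, ξ⟫ * v i / (1 + ‖v‖ ^ 2) with hW
  have hVV : V ⬝ᵥ V = ‖v‖ ^ 2 := by rw [hnv]; rfl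
  have hmat : hessXi (fun ζ => qf v ζ ^ ((3:ℝ)/4)) ξ
      = ((3:ℝ)/2 * qf v ξ ^ ((3:ℝ)/4 - 1)) •
        Matrix.of (fun i j => (if i = j then (1:ℝ) else 0)
          - (1 + V ⬝ᵥ V)⁻¹ * (V i * V j) - (2 * qf v ξ)⁻¹ * (W i * W j)) := by
    ext i j
    rw [Matrix.smul_apply, Matrix.of_apply, hess_entry v hξ0 i j, hVV]
    have hrw : qf v ξ ^ ((3:ℝ)/4 - 1 - 1) = qf v ξ ^ ((3:ℝ)/4 - 1) * (qf v ξ)⁻¹ := by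
      rw [Real.rpow_sub hQ, Real.rpow_one]
      exact div_eq_mul_inv _ _
    rw [hrw, smul_eq_mul, hW, hV]
    field_simp
    ring
  rw [hmat, Matrix.det_smul, det_aux V W ((2 * qf v ξ)⁻¹)]
  have hVW : V ⬝ᵥ W = ⟪v, ξ⟫ - ⟪v, ξ⟫ * ‖v‖ ^ 2 / (1 + ‖v‖ ^ 2) := by
    rw [dotProduct]
    have h1 : ∀ i, V i * W i
        = v i * ξ i - (⟪v, ξ⟫ / (1 + ‖v‖ ^ 2)) * (v i * v i) := by
      intro i; rw [hW, hV]; ring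
    rw [Finset.sum_congr rfl fun i _ => h1 i, Finset.sum_sub_distrib, ← Finset.mul_sum,
      ← hvξ, ← hnv]
    ring
  have hWW : W ⬝ᵥ W = ‖ξ‖ ^ 2 - 2 * ⟪v, ξ⟫ ^ 2 / (1 + ‖v‖ ^ 2)
      + ⟪v, ξ⟫ ^ 2 * ‖v‖ ^ 2 / (1 + ‖v‖ ^ 2) ^ 2 := by
    rw [dotProduct]
    have h1 : ∀ i, W i * W i
        = ξ i * ξ i - (2 * ⟪v, ξ⟫ / (1 + ‖v‖ ^ 2)) * (v i * ξ i)
          + (⟪v, ξ⟫ ^ 2 / (1 + ‖v‖ ^ 2) ^ 2) * (v i * v i) := by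
      intro i; rw [hW]; field_simp; ring
    rw [Finset.sum_congr rfl fun i _ => h1 i, Finset.sum_add_distrib,
      Finset.sum_sub_distrib, ← Finset.mul_sum, ← Finset.mul_sum, ← hvξ, ← hnv, ← hnξ]
    ring
  have hQeq : W ⬝ᵥ W + (V ⬝ᵥ W) ^ 2 = qf v ξ := by
    rw [hVW, hWW, qf]; field_simp; ring
  have h12 : 1 - (2 * qf v ξ)⁻¹ * (W ⬝ᵥ W + (V ⬝ᵥ W) ^ 2) = 1/2 := by
    rw [hQeq]; field_simp; ring
  rw [h12, hVV]
  -- final bound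
  have hQle : qf v ξ ≤ R₂ ^ 2 := by
    have h2 : ‖ξ‖ ^ 2 ≤ R₂ ^ 2 := by nlinarith [norm_nonneg ξ]
    have h3 : 0 ≤ ⟪v, ξ⟫ ^ 2 / (1 + ‖v‖ ^ 2) := div_nonneg (sq_nonneg _) hs.le
    rw [qf]; linarith
  have hc1 : (3:ℝ)/2 * (R₂ ^ 2) ^ ((3:ℝ)/4 - 1) ≤ (3:ℝ)/2 * qf v ξ ^ ((3:ℝ)/4 - 1) := by
    have := Real.rpow_le_rpow_of_nonpos hQ hQle (by norm_num : ((3:ℝ)/4 - 1) ≤ 0)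
    linarith
  have hc1pos : 0 < (3:ℝ)/2 * qf v ξ ^ ((3:ℝ)/4 - 1) := by
    have := Real.rpow_pos_of_pos hQ ((3:ℝ)/4 - 1); linarith
  have hMpos : (0:ℝ) < 1 + M := by linarith
  have hrpow : (1 + M) ^ (-((2:ℕ) : ℝ)) = ((1 + M) ^ 2)⁻¹ := by
    rw [Real.rpow_neg hMpos.le, Real.rpow_natCast]
  rw [hrpow]
  have hsle : 1 + ‖v‖ ^ 2 ≤ (1 + M) ^ 2 := by nlinarith [norm_nonneg v]
  have hinv : ((1 + M) ^ 2)⁻¹ ≤ (1 + ‖v‖ ^ 2)⁻¹ := by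
    apply inv_anti₀ hs hsle
  have hpow : ((3:ℝ)/2 * (R₂ ^ 2) ^ ((3:ℝ)/4 - 1)) ^ d
      ≤ ((3:ℝ)/2 * qf v ξ ^ ((3:ℝ)/4 - 1)) ^ d :=
    pow_le_pow_left₀ hc0.le hc1 d
  rw [Fintype.card_fin]
  have habs : |((3:ℝ)/2 * qf v ξ ^ ((3:ℝ)/4 - 1)) ^ d * ((1 + ‖v‖ ^ 2)⁻¹ * (1/2))|
      = ((3:ℝ)/2 * qf v ξ ^ ((3:ℝ)/4 - 1)) ^ d * ((1 + ‖v‖ ^ 2)⁻¹ * (1/2)) := by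
    apply abs_of_pos
    exact mul_pos (pow_pos hc1pos d) (mul_pos (inv_pos.mpr hs) one_half_pos)
  rw [habs]
  have hpow : ((3:ℝ)/2 * (R₂ ^ 2) ^ ((3:ℝ)/4 - 1)) ^ d
      ≤ ((3:ℝ)/2 * qf v ξ ^ ((3:ℝ)/4 - 1)) ^ d := pow_le_pow_left₀ hc0.le hc1 d
  have hinv : ((1 + M) ^ 2)⁻¹ ≤ (1 + ‖v‖ ^ 2)⁻¹ := by
    apply inv_anti₀ hs
    nlinarith [norm_nonneg v]
  have h0 : (0:ℝ) ≤ ((1 + M) ^ 2)⁻¹ := by positivity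
  calc ((3:ℝ)/2 * (R₂ ^ 2) ^ ((3:ℝ)/4 - 1)) ^ d / 2 * ((1 + M) ^ 2)⁻¹
      = (((3:ℝ)/2 * (R₂ ^ 2) ^ ((3:ℝ)/4 - 1)) ^ d * ((1 + M) ^ 2)⁻¹) * (1/2) := by ring
    _ ≤ (((3:ℝ)/2 * qf v ξ ^ ((3:ℝ)/4 - 1)) ^ d * (1 + ‖v‖ ^ 2)⁻¹) * (1/2) := by
        apply mul_le_mul_of_nonneg_right _ (by norm_num)
        exact mul_le_mul hpow hinv h0 (pow_nonneg hc1pos.le d)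
    _ = _ := by ring
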